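/- (Purification with the conjugate Hamiltonian yields the Wigner–Yanase skew information.) Let ρ be a d×d density matrix with spectral decomposition ρ = Σ_j p_j |φ_j⟩⟨φ_j| ({φ_j} an orthonormal basis), and let H_S be an Hermitian d×d matrix. Define the Hermitian matrix H_A by ⟨φ_a|H_A|φ_b⟩ = −⟨φ_b|H_S|φ_a⟩ (i.e. H_A is minus the transpose of H_S in the eigenbasis of ρ), the unit vector Φ = Σ_j √p_j φ_j ⊗ φ_j ∈ ℂ^d ⊗ ℂ^d, and H_tot = H_S ⊗ I + I ⊗ H_A. Then ⟨Φ|H_tot|Φ⟩ = 0 and ⟨Φ|H_tot²|Φ⟩ − ⟨Φ|H_tot|Φ⟩² = 2·W_{H_S}(ρ), where W_H(ρ) = −(1/2)·Tr([H, √ρ]²) = Tr(ρ H²) − Tr(√ρ H √ρ H) is the Wigner–Yanase skew information. Consequently, 2·W_{H_S}(ρ) ≥ F_{H_S}(ρ)/4. -/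

import Mathlib

open Matrix Complex Filter Kronecker
open scoped ComplexOrder

lemma quadSum {d : ℕ} (g : Fin d → Fin d → Fin d → Fin d → ℂ) :
    (∑ a, ∑ b, ∑ c, ∑ e, g a b c e)
      = ∑ q : (Fin d × Fin d) × (Fin d × Fin d), g q.1.1 q.1.2 q.2.1 q.2.2 := by
  simp [Fintype.sum_prod_type]

lemma kronQuadForm {d : ℕ} (A B M : Matrix (Fin d) (Fin d) ℂ) :
    star (fun q : Fin d × Fin d => M q.1 q.2) ⬝ᵥ
      ((A ⊗ₖ B) *ᵥ fun q : Fin d × Fin d => M q.1 q.2) =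
    (Mᴴ * A * M * Bᵀ).trace := by
  simp only [Matrix.trace, Matrix.diag, Matrix.mul_apply, Matrix.mulVec, dotProduct,
    Pi.star_apply, Matrix.kroneckerMap_apply, Matrix.transpose_apply, Matrix.conjTranspose_apply,
    Fintype.sum_prod_type, Finset.sum_mul, Finset.mul_sum]
  rw [quadSum, quadSum]
  refine Fintype.sum_equiv
    ⟨fun q => ((q.1.2, q.2.2), (q.2.1, q.1.1)), fun q => ((q.2.2, q.1.1), (q.2.1, q.1.2)),
      fun q => rfl, fun q => rfl⟩ _ _ ?_
  intro q
  simp only [Equiv.coe_fn_mk]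
  ring

lemma ineq_aux (a b n : ℝ) (hn : 0 ≤ n) (h : 0 < a ^ 2 + b ^ 2) :
    (a ^ 2 - b ^ 2) ^ 2 / (a ^ 2 + b ^ 2) * n / 2 ≤ (a ^ 2 + b ^ 2 - 2 * a * b) * n := by
  rw [div_mul_eq_mul_div, div_div, div_le_iff₀ (by positivity)]
  nlinarith [mul_nonneg hn (sq_nonneg ((a - b) * (a - b)))]

noncomputable section

/-- n-fold Kronecker power of a matrix, indexed by functions `Fin n → Fin d`. -/
def kronPow {d : ℕ} (X : Matrix (Fin d) (Fin d) ℂ) (n : ℕ) :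
    Matrix (Fin n → Fin d) (Fin n → Fin d) ℂ :=
  Matrix.of fun i j => ∏ k, X (i k) (j k)

/-- The `n`-copy (non-interacting) Hamiltonian `Σᵢ I^{⊗(i-1)} ⊗ H ⊗ I^{⊗(n-i)}`. -/
def nCopyHam {d : ℕ} (H : Matrix (Fin d) (Fin d) ℂ) (n : ℕ) :
    Matrix (Fin n → Fin d) (Fin n → Fin d) ℂ :=
  ∑ k : Fin n, Matrix.of fun i j =>
    H (i k) (j k) * ∏ l ∈ Finset.univ.erase k, (if i l = j l then (1 : ℂ) else 0)

/-- Time evolution unitary `e^{-iHt}`. -/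
def timeEvol {m : Type*} [Fintype m] [DecidableEq m] (H : Matrix m m ℂ) (t : ℝ) :
    Matrix m m ℂ :=
  NormedSpace.exp ((-(Complex.I * (t : ℂ))) • H)

/-- Trace norm `‖A‖₁ = Tr √(AᴴA)`. -/
def traceNorm {m : Type*} [Fintype m] [DecidableEq m] (A : Matrix m m ℂ) : ℝ :=
  (((Matrix.posSemidef_conjTranspose_mul_self A).1.eigenvectorUnitary.1 *
      diagonal (((↑) : ℝ → ℂ) ∘ (Real.sqrt ∘ (Matrix.posSemidef_conjTranspose_mul_self A).1.eigenvalues)) *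
      (star (Matrix.posSemidef_conjTranspose_mul_self A).1.eigenvectorUnitary :
        Matrix m m ℂ)).trace).re

/-- A quantum channel: a map admitting a Kraus representation. -/
def IsQuantumChannel {m n : Type*} [Fintype m] [DecidableEq m] [Fintype n] [DecidableEq n]
    (E : Matrix m m ℂ → Matrix n n ℂ) : Prop :=
  ∃ (K : ℕ) (A : Fin K → Matrix n m ℂ),
    (∀ X, E X = ∑ k, A k * X * (A k)ᴴ) ∧ (∑ k, (A k)ᴴ * A k = 1)

/-- Time-translation invariance of a map w.r.t. input/output Hamiltonians. -/
def IsTI {m n : Type*} [Fintype m] [DecidableEq m] [Fintype n] [DecidableEq n]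
    (Hin : Matrix m m ℂ) (Hout : Matrix n n ℂ)
    (E : Matrix m m ℂ → Matrix n n ℂ) : Prop :=
  ∀ (t : ℝ) (X : Matrix m m ℂ),
    timeEvol Hout t * E X * timeEvol Hout (-t) =
      E (timeEvol Hin t * X * timeEvol Hin (-t))

/-- Energy variance of a (unit) vector. -/
def varVec {m : Type*} [Fintype m] (H : Matrix m m ℂ) (ψ : m → ℂ) : ℝ :=
  (star ψ ⬝ᵥ ((H * H) *ᵥ ψ)).re - ((star ψ ⬝ᵥ (H *ᵥ ψ)).re) ^ 2

/-- The quantum Fisher information formula for a given spectral decomposition data. -/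
def qfiOf {m : Type*} [Fintype m] (H : Matrix m m ℂ) (p : m → ℝ) (φ : m → m → ℂ) : ℝ :=
  2 * ∑ j, ∑ k,
    if 0 < p j + p k then
      (p j - p k) ^ 2 / (p j + p k) * Complex.normSq (star (φ j) ⬝ᵥ (H *ᵥ φ k))
    else 0

/-- Quantum Fisher information of a Hermitian (e.g. density) matrix `ρ` w.r.t. `H`. -/
def QFI {m : Type*} [Fintype m] [DecidableEq m] {ρ : Matrix m m ℂ}
    (hρ : ρ.IsHermitian) (H : Matrix m m ℂ) : ℝ :=
  qfiOf H hρ.eigenvalues (fun j i => hρ.eigenvectorBasis j i)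

open scoped Classical in
/-- Total positive-semidefinite square root (zero on non-PSD inputs). -/
def msqrt {m : Type*} [Fintype m] [DecidableEq m] (A : Matrix m m ℂ) : Matrix m m ℂ :=
  if h : A.PosSemidef then
    h.1.eigenvectorUnitary.1 * diagonal (((↑) : ℝ → ℂ) ∘ (Real.sqrt ∘ h.1.eigenvalues)) *
      (star h.1.eigenvectorUnitary : Matrix m m ℂ)
  else 0

/-- Fidelity `Fid(ρ,σ) = (Tr √(√ρ σ √ρ))² = ‖√σ √ρ‖₁²`. -/
def fid {m : Type*} [Fintype m] [DecidableEq m] (ρ σ : Matrix m m ℂ) : ℝ :=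
  (traceNorm (msqrt σ * msqrt ρ)) ^ 2

/-- Density matrix. -/
def IsDensityMatrix {m : Type*} [Fintype m] (ρ : Matrix m m ℂ) : Prop :=
  ρ.PosSemidef ∧ ρ.trace = 1


set_option maxHeartbeats 1000000 in
theorem conjugate_hamiltonian_skew_information
    {d : ℕ} (ρ HS HA : Matrix (Fin d) (Fin d) ℂ)
    (p : Fin d → ℝ) (φ : Fin d → Fin d → ℂ)
    (hp : ∀ j, 0 ≤ p j) (hsum : ∑ j, p j = 1)
    (horth : ∀ a b, star (φ a) ⬝ᵥ φ b = if a = b then (1 : ℂ) else 0)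
    (hρdef : ρ = ∑ j, ((p j : ℝ) : ℂ) • Matrix.vecMulVec (φ j) (star (φ j)))
    (hHS : HS.IsHermitian)
    (hHA : ∀ a b, star (φ a) ⬝ᵥ (HA *ᵥ φ b) = -(star (φ b) ⬝ᵥ (HS *ᵥ φ a))) :
    ∀ sqrtρ : Matrix (Fin d) (Fin d) ℂ,
      sqrtρ = ∑ j, ((Real.sqrt (p j) : ℝ) : ℂ) • Matrix.vecMulVec (φ j) (star (φ j)) →
      ∀ W : ℝ, W = ((ρ * (HS * HS)).trace).re - ((sqrtρ * HS * sqrtρ * HS).trace).re →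
      (star (fun q : Fin d × Fin d => ∑ j, ((Real.sqrt (p j) : ℝ) : ℂ) * φ j q.1 * φ j q.2) ⬝ᵥ
        ((HS ⊗ₖ (1 : Matrix (Fin d) (Fin d) ℂ) + (1 : Matrix (Fin d) (Fin d) ℂ) ⊗ₖ HA) *ᵥ
          fun q : Fin d × Fin d => ∑ j, ((Real.sqrt (p j) : ℝ) : ℂ) * φ j q.1 * φ j q.2) = 0) ∧
      varVec (HS ⊗ₖ (1 : Matrix (Fin d) (Fin d) ℂ) + (1 : Matrix (Fin d) (Fin d) ℂ) ⊗ₖ HA)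
          (fun q : Fin d × Fin d => ∑ j, ((Real.sqrt (p j) : ℝ) : ℂ) * φ j q.1 * φ j q.2) =
        2 * W ∧
      W = (-(1 / 2 : ℂ) * (((HS * sqrtρ - sqrtρ * HS) * (HS * sqrtρ - sqrtρ * HS)).trace)).re ∧
      qfiOf HS p φ / 4 ≤ 2 * W := by
  intro sq hsq W hW
  set V : Matrix (Fin d) (Fin d) ℂ := Matrix.of fun i j => φ j i with hV
  set S : Matrix (Fin d) (Fin d) ℂ := Matrix.diagonal fun j => ((Real.sqrt (p j) : ℝ) : ℂ) with hS
  set D : Matrix (Fin d) (Fin d) ℂ := Matrix.diagonal fun j => ((p j : ℝ) : ℂ) with hD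
  have hVV : Vᴴ * V = 1 := by
    ext a b
    simpa [hV, Matrix.mul_apply, Matrix.one_apply, dotProduct] using horth a b
  have hVV' : V * Vᴴ = 1 := mul_eq_one_comm.mp hVV
  have hent : ∀ (X : Matrix (Fin d) (Fin d) ℂ) (a b : Fin d),
      (Vᴴ * X * V) a b = star (φ a) ⬝ᵥ (X *ᵥ φ b) := by
    intro X a b
    simp only [hV, Matrix.mul_apply, Matrix.mulVec, dotProduct, Matrix.conjTranspose_apply,
      Matrix.of_apply, Pi.star_apply, Finset.mul_sum, Finset.sum_mul]
    rw [Finset.sum_comm]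
    exact Finset.sum_congr rfl fun i _ => Finset.sum_congr rfl fun m _ => by ring
  set Ht : Matrix (Fin d) (Fin d) ℂ := Vᴴ * HS * V with hHt
  have hAt : Vᴴ * HA * V = -Htᵀ := by
    ext a b
    rw [Matrix.neg_apply, Matrix.transpose_apply, hent HA a b, hHA a b, hHt, hent HS b a]
  have hHtH : Htᴴ = Ht := by
    rw [hHt, Matrix.conjTranspose_mul, Matrix.conjTranspose_mul, Matrix.conjTranspose_conjTranspose,
      hHS.eq, Matrix.mul_assoc]
  have hconj : ∀ j k, Ht k j = starRingEnd ℂ (Ht j k) := by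
    intro j k
    conv_lhs => rw [← hHtH]
    simp [Matrix.conjTranspose_apply]
  have hSH : Sᴴ = S := by
    ext a b
    rw [hS, Matrix.diagonal_conjTranspose, Matrix.diagonal_apply, Matrix.diagonal_apply]
    simp [Complex.conj_ofReal]
  have hSS : S * S = D := by
    have h : (fun j => ((Real.sqrt (p j) : ℝ) : ℂ) * ((Real.sqrt (p j) : ℝ) : ℂ))
        = fun j => ((p j : ℝ) : ℂ) :=
      funext fun j => by rw [← Complex.ofReal_mul, Real.mul_self_sqrt (hp j)]
    rw [hS, hD, Matrix.diagonal_mul_diagonal, h]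
  have hρV : ρ = V * D * Vᴴ := by
    rw [hρdef]
    ext i i'
    simp only [Matrix.sum_apply, Matrix.smul_apply, Matrix.vecMulVec_apply, Pi.star_apply,
      smul_eq_mul, hD, hV, Matrix.mul_apply, Matrix.diagonal_apply, Matrix.conjTranspose_apply,
      Matrix.of_apply]
    simp only [Finset.sum_mul, Finset.mul_sum, ite_mul, mul_ite, zero_mul, mul_zero,
      Finset.sum_ite_eq, Finset.sum_ite_eq', Finset.mem_univ, if_true]
    exact Finset.sum_congr rfl fun j _ => by ring
  have hsqV : sq = V * S * Vᴴ := by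
    rw [hsq]
    ext i i'
    simp only [Matrix.sum_apply, Matrix.smul_apply, Matrix.vecMulVec_apply, Pi.star_apply,
      smul_eq_mul, hS, hV, Matrix.mul_apply, Matrix.diagonal_apply, Matrix.conjTranspose_apply,
      Matrix.of_apply]
    simp only [Finset.sum_mul, Finset.mul_sum, ite_mul, mul_ite, zero_mul, mul_zero,
      Finset.sum_ite_eq, Finset.sum_ite_eq', Finset.mem_univ, if_true]
    exact Finset.sum_congr rfl fun j _ => by ring
  set M : Matrix (Fin d) (Fin d) ℂ := V * S * Vᵀ with hM
  have hΦM : (fun q : Fin d × Fin d => ∑ j, ((Real.sqrt (p j) : ℝ) : ℂ) * φ j q.1 * φ j q.2)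
      = fun q : Fin d × Fin d => M q.1 q.2 := by
    funext q
    simp only [hM, hV, hS, Matrix.mul_apply, Matrix.diagonal_apply, Matrix.transpose_apply,
      Matrix.of_apply, Finset.sum_mul, Finset.mul_sum, ite_mul, mul_ite, zero_mul, mul_zero,
      Finset.sum_ite_eq, Finset.sum_ite_eq', Finset.mem_univ, if_true]
    exact Finset.sum_congr rfl fun j _ => by ring
  have hTt : (Vᵀ)ᴴ = (Vᴴ)ᵀ := by ext i j; simp
  have hMH : Mᴴ = (Vᴴ)ᵀ * S * Vᴴ := by
    rw [hM, Matrix.conjTranspose_mul, Matrix.conjTranspose_mul, hSH, hTt, Matrix.mul_assoc]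
  have trconj : ∀ X : Matrix (Fin d) (Fin d) ℂ, (V * X * Vᴴ).trace = X.trace := by
    intro X
    rw [Matrix.trace_mul_cycle, hVV, Matrix.one_mul]
  have hins : ∀ X Y : Matrix (Fin d) (Fin d) ℂ,
      (Vᴴ * X * V) * (Vᴴ * Y * V) = Vᴴ * (X * Y) * V := by
    intro X Y
    calc (Vᴴ * X * V) * (Vᴴ * Y * V) = Vᴴ * (X * ((V * Vᴴ) * (Y * V))) := by
          simp only [Matrix.mul_assoc]
      _ = Vᴴ * (X * Y) * V := by rw [hVV', Matrix.one_mul]; simp only [Matrix.mul_assoc]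
  have kform : ∀ A B : Matrix (Fin d) (Fin d) ℂ,
      star (fun q : Fin d × Fin d => ∑ j, ((Real.sqrt (p j) : ℝ) : ℂ) * φ j q.1 * φ j q.2) ⬝ᵥ
        ((A ⊗ₖ B) *ᵥ fun q : Fin d × Fin d => ∑ j, ((Real.sqrt (p j) : ℝ) : ℂ) * φ j q.1 * φ j q.2)
      = (S * (Vᴴ * A * V) * S * (Vᴴ * B * V)ᵀ).trace := by
    intro A B
    rw [hΦM, kronQuadForm, hMH, hM]
    have h1 : (Vᴴ)ᵀ * S * Vᴴ * A * (V * S * Vᵀ) * Bᵀ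
        = (Vᴴ)ᵀ * (S * (Vᴴ * A * V) * S * (Vᵀ * Bᵀ)) := by
      simp only [Matrix.mul_assoc]
    rw [h1, Matrix.trace_mul_comm]
    congr 1
    rw [Matrix.transpose_mul, Matrix.transpose_mul]
    simp only [Matrix.mul_assoc]
  have hV1 : Vᴴ * 1 * V = 1 := by rw [Matrix.mul_one, hVV]
  -- trace values as real sums
  have tr1 : (D * (Ht * Ht)).trace
      = ((∑ j, ∑ k, p j * Complex.normSq (Ht j k) : ℝ) : ℂ) := by
    have h0 : (D * (Ht * Ht)).trace = ∑ j, ∑ k, D j k * (Ht * Ht) k j := rfl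
    rw [h0, hD]
    simp only [Matrix.diagonal_apply, ite_mul, zero_mul, Finset.sum_ite_eq, Finset.mem_univ,
      if_true, Matrix.mul_apply]
    push_cast
    refine Finset.sum_congr rfl fun j _ => ?_
    rw [Finset.mul_sum]
    refine Finset.sum_congr rfl fun k _ => ?_
    rw [hconj j k, ← Complex.mul_conj]
  have tr2 : (S * Ht * S * Ht).trace
      = ((∑ j, ∑ k, Real.sqrt (p j) * Real.sqrt (p k) * Complex.normSq (Ht j k) : ℝ) : ℂ) := by
    have h1 : ∀ j k, (S * Ht * S) j k
        = ((Real.sqrt (p j) : ℝ) : ℂ) * Ht j k * ((Real.sqrt (p k) : ℝ) : ℂ) := by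
      intro j k
      rw [hS, Matrix.mul_diagonal, Matrix.diagonal_mul]
    have h2 : (S * Ht * S * Ht).trace = ∑ j, ∑ k, (S * Ht * S) j k * Ht k j := rfl
    rw [h2]
    push_cast
    refine Finset.sum_congr rfl fun j _ => Finset.sum_congr rfl fun k _ => ?_
    rw [h1 j k, hconj j k, ← Complex.mul_conj]
    ring
  -- trace identities for W
  have trρeq : (ρ * (HS * HS)).trace = (D * (Ht * Ht)).trace := by
    rw [hρV]
    calc (V * D * Vᴴ * (HS * HS)).trace
        = ((V * D) * (Vᴴ * (HS * HS))).trace := by rw [Matrix.mul_assoc]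
      _ = ((Vᴴ * (HS * HS)) * (V * D)).trace := Matrix.trace_mul_comm _ _
      _ = ((Vᴴ * (HS * HS) * V) * D).trace := by simp only [Matrix.mul_assoc]
      _ = (D * (Vᴴ * (HS * HS) * V)).trace := Matrix.trace_mul_comm _ _
      _ = (D * (Ht * Ht)).trace := by rw [← hins HS HS, ← hHt]
  have trsqeq : (sq * HS * sq * HS).trace = (S * Ht * S * Ht).trace := by
    rw [hsqV]
    have h2 : V * (S * (Vᴴ * HS * V) * S * (Vᴴ * HS * V)) * Vᴴ
        = V * S * Vᴴ * HS * (V * S * Vᴴ) * HS := by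
      calc V * (S * (Vᴴ * HS * V) * S * (Vᴴ * HS * V)) * Vᴴ
          = V * (S * (Vᴴ * (HS * (V * (S * (Vᴴ * (HS * (V * Vᴴ)))))))) := by
            simp only [Matrix.mul_assoc]
        _ = V * S * Vᴴ * HS * (V * S * Vᴴ) * HS := by
            rw [hVV', Matrix.mul_one]; simp only [Matrix.mul_assoc]
    rw [← h2, trconj, ← hHt]
  have hWsum : W = (∑ j, ∑ k, p j * Complex.normSq (Ht j k))
      - ∑ j, ∑ k, Real.sqrt (p j) * Real.sqrt (p k) * Complex.normSq (Ht j k) := by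
    rw [hW, trρeq, trsqeq, tr1, tr2, Complex.ofReal_re, Complex.ofReal_re]
  -- claim 1
  have hzero : (star (fun q : Fin d × Fin d =>
        ∑ j, ((Real.sqrt (p j) : ℝ) : ℂ) * φ j q.1 * φ j q.2) ⬝ᵥ
      ((HS ⊗ₖ (1 : Matrix (Fin d) (Fin d) ℂ) + (1 : Matrix (Fin d) (Fin d) ℂ) ⊗ₖ HA) *ᵥ
        fun q : Fin d × Fin d => ∑ j, ((Real.sqrt (p j) : ℝ) : ℂ) * φ j q.1 * φ j q.2)) = 0 := by
    rw [Matrix.add_mulVec, dotProduct_add, kform HS 1, kform 1 HA, hV1, hAt, ← hHt]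
    simp only [Matrix.transpose_one, Matrix.mul_one, Matrix.transpose_neg,
      Matrix.transpose_transpose, Matrix.mul_neg, Matrix.trace_neg, Matrix.one_mul]
    rw [Matrix.trace_mul_cycle S Ht S]
    exact add_neg_cancel _
  refine ⟨hzero, ?_, ?_, ?_⟩
  · -- variance = 2W
    rw [varVec, hzero]
    have hsq2 : (HS ⊗ₖ (1 : Matrix (Fin d) (Fin d) ℂ) + (1 : Matrix (Fin d) (Fin d) ℂ) ⊗ₖ HA)
        * (HS ⊗ₖ (1 : Matrix (Fin d) (Fin d) ℂ) + (1 : Matrix (Fin d) (Fin d) ℂ) ⊗ₖ HA)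
        = ((HS * HS) ⊗ₖ (1 : Matrix (Fin d) (Fin d) ℂ) + HS ⊗ₖ HA)
          + (HS ⊗ₖ HA + (1 : Matrix (Fin d) (Fin d) ℂ) ⊗ₖ (HA * HA)) := by
      rw [add_mul, mul_add, mul_add]
      simp only [← Matrix.mul_kronecker_mul, Matrix.one_mul, Matrix.mul_one]
    rw [hsq2, Matrix.add_mulVec, dotProduct_add, Matrix.add_mulVec, dotProduct_add,
      Matrix.add_mulVec, dotProduct_add, kform, kform, kform,
      hV1, hAt, ← hins HS HS, ← hins HA HA, hAt, ← hHt]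
    simp only [Matrix.transpose_one, Matrix.mul_one, Matrix.transpose_neg, Matrix.neg_mul,
      Matrix.mul_neg, neg_neg, Matrix.transpose_transpose, Matrix.transpose_mul,
      Matrix.trace_neg, Matrix.one_mul]
    rw [Matrix.trace_mul_cycle S (Ht * Ht) S, hSS]
    rw [tr1, tr2]
    rw [hWsum]
    simp only [Complex.add_re, Complex.neg_re, Complex.ofReal_re, Complex.zero_re]
    ring
  · -- claim 3
    have hins2 : (V * S * Vᴴ) * (V * S * Vᴴ) = V * (S * S) * Vᴴ := by
      calc (V * S * Vᴴ) * (V * S * Vᴴ) = V * (S * ((Vᴴ * V) * (S * Vᴴ))) := by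
            simp only [Matrix.mul_assoc]
        _ = V * (S * S) * Vᴴ := by rw [hVV, Matrix.one_mul]; simp only [Matrix.mul_assoc]
    have hsqsq : sq * sq = ρ := by rw [hsqV, hins2, hSS, ← hρV]
    have hKK : (HS * sq - sq * HS) * (HS * sq - sq * HS)
        = HS * sq * (HS * sq) - HS * (sq * sq) * HS - sq * (HS * HS) * sq
          + sq * HS * (sq * HS) := by noncomm_ring
    have e1 : (HS * sq * (HS * sq)).trace = (sq * HS * sq * HS).trace := by
      calc (HS * sq * (HS * sq)).trace = (HS * (sq * (HS * sq))).trace := by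
            rw [Matrix.mul_assoc]
        _ = ((sq * (HS * sq)) * HS).trace := Matrix.trace_mul_comm _ _
        _ = (sq * HS * sq * HS).trace := by simp only [Matrix.mul_assoc]
    have e2 : (HS * (sq * sq) * HS).trace = (ρ * (HS * HS)).trace := by
      rw [hsqsq]
      calc (HS * ρ * HS).trace = ((HS * ρ) * HS).trace := rfl
        _ = (HS * (HS * ρ)).trace := Matrix.trace_mul_comm _ _
        _ = ((HS * HS) * ρ).trace := by rw [Matrix.mul_assoc]
        _ = (ρ * (HS * HS)).trace := Matrix.trace_mul_comm _ _
    have e3 : (sq * (HS * HS) * sq).trace = (ρ * (HS * HS)).trace := by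
      rw [Matrix.trace_mul_cycle, ← Matrix.mul_assoc, hsqsq, Matrix.mul_assoc]
    have e4 : (sq * HS * (sq * HS)).trace = (sq * HS * sq * HS).trace := by
      rw [Matrix.mul_assoc (sq * HS) sq HS]
    rw [hKK, Matrix.trace_add, Matrix.trace_sub, Matrix.trace_sub, e1, e2, e3, e4]
    rw [hW]
    have : (-(1 / 2 : ℂ)) * ((sq * HS * sq * HS).trace - (ρ * (HS * HS)).trace
        - (ρ * (HS * HS)).trace + (sq * HS * sq * HS).trace)
        = (ρ * (HS * HS)).trace - (sq * HS * sq * HS).trace := by ring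
    rw [this, Complex.sub_re]
  · -- QFI inequality
    have hnormsym : ∀ j k, Complex.normSq (Ht j k) = Complex.normSq (Ht k j) := by
      intro j k
      rw [hconj j k, Complex.normSq_conj]
    have h2W : 2 * W = ∑ j, ∑ k,
        (p j + p k - 2 * Real.sqrt (p j) * Real.sqrt (p k)) * Complex.normSq (Ht j k) := by
      have hswap : (∑ j, ∑ k, p j * Complex.normSq (Ht j k))
          = ∑ j, ∑ k, p k * Complex.normSq (Ht j k) := by
        rw [Finset.sum_comm]
        exact Finset.sum_congr rfl fun j _ => Finset.sum_congr rfl fun k _ => by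
          rw [hnormsym j k]
      have expand : ∑ j, ∑ k,
          (p j + p k - 2 * Real.sqrt (p j) * Real.sqrt (p k)) * Complex.normSq (Ht j k)
          = ((∑ j, ∑ k, p j * Complex.normSq (Ht j k))
              + ∑ j, ∑ k, p k * Complex.normSq (Ht j k))
            - 2 * ∑ j, ∑ k, Real.sqrt (p j) * Real.sqrt (p k) * Complex.normSq (Ht j k) := by
        simp only [Finset.mul_sum, ← Finset.sum_add_distrib, ← Finset.sum_sub_distrib]
        refine Finset.sum_congr rfl fun j _ => Finset.sum_congr rfl fun k _ => ?_
        ring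
      rw [hWsum, expand, ← hswap]
      ring
    have hq2 : qfiOf HS p φ = 2 * ∑ j, ∑ k,
        if 0 < p j + p k then
          (p j - p k) ^ 2 / (p j + p k) * Complex.normSq (Ht j k)
        else 0 := by
      rw [qfiOf]
      congr 1
      refine Finset.sum_congr rfl fun j _ => Finset.sum_congr rfl fun k _ => ?_
      rw [← hent HS j k, ← hHt]
    rw [hq2, h2W]
    have hterm : ∀ j k, (if 0 < p j + p k then
          (p j - p k) ^ 2 / (p j + p k) * Complex.normSq (Ht j k) else 0) / 2
        ≤ (p j + p k - 2 * Real.sqrt (p j) * Real.sqrt (p k)) * Complex.normSq (Ht j k) := by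
      intro j k
      have hn : (0:ℝ) ≤ Complex.normSq (Ht j k) := Complex.normSq_nonneg _
      have ha : Real.sqrt (p j) ^ 2 = p j := Real.sq_sqrt (hp j)
      have hb : Real.sqrt (p k) ^ 2 = p k := Real.sq_sqrt (hp k)
      have ha0 : 0 ≤ Real.sqrt (p j) := Real.sqrt_nonneg _
      have hb0 : 0 ≤ Real.sqrt (p k) := Real.sqrt_nonneg _
      split_ifs with h
      · have h' : (0:ℝ) < Real.sqrt (p j) ^ 2 + Real.sqrt (p k) ^ 2 := by rw [ha, hb]; exact h
        have := ineq_aux (Real.sqrt (p j)) (Real.sqrt (p k)) (Complex.normSq (Ht j k)) hn h'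
        rw [ha, hb] at this
        exact this
      · have h0j : p j = 0 := le_antisymm (by push_neg at h; linarith [hp k]) (hp j)
        have h0k : p k = 0 := le_antisymm (by push_neg at h; linarith [hp j]) (hp k)
        simp [h0j, h0k]
    calc 2 * (∑ j, ∑ k, if 0 < p j + p k then
            (p j - p k) ^ 2 / (p j + p k) * Complex.normSq (Ht j k) else 0) / 4
        = ∑ j, ∑ k, (if 0 < p j + p k then
            (p j - p k) ^ 2 / (p j + p k) * Complex.normSq (Ht j k) else 0) / 2 := by
          rw [show ∀ X : ℝ, 2 * X / 4 = X / 2 from fun X => by ring, Finset.sum_div]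
          exact Finset.sum_congr rfl fun j _ => by rw [Finset.sum_div]
      _ ≤ _ := Finset.sum_le_sum fun j _ => Finset.sum_le_sum fun k _ => hterm j k

end
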